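/- Let ν be a Borel probability measure on ℝ with finite first moment and let r ≥ 0. Then the set B = { μ : μ a Borel probability measure on ℝ such that ∫ f dμ − ∫ f dν ≤ r for every bounded 1-Lipschitz f : ℝ → ℝ } is compact in the topology of weak convergence of probability measures on ℝ. -/

import Mathlib

open MeasureTheory Set Filter Topology

lemma wb_Ioc_toReal (P : Measure ℝ) [IsProbabilityMeasure P] {a b : ℝ} (hab : a ≤ b) :
    (P (Ioc a b)).toReal = (P (Iic b)).toReal - (P (Iic a)).toReal := by
  have h : P (Iic a) + P (Ioc a b) = P (Iic b) := by
    rw [← measure_union (Iic_disjoint_Ioc le_rfl) measurableSet_Ioc, Iic_union_Ioc_eq_Iic hab]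
  have ha := measure_ne_top P (Iic a)
  have hb := measure_ne_top P (Ioc a b)
  rw [← h, ENNReal.toReal_add ha hb]
  ring

lemma wb_union_toReal (P : Measure ℝ) [IsProbabilityMeasure P] {s t : Set ℝ}
    (ht : MeasurableSet t) :
    (P (s ∪ t)).toReal = (P s).toReal + (P t).toReal - (P (s ∩ t)).toReal := by
  have h := measure_union_add_inter (μ := P) s ht
  have h' : (P (s ∪ t)).toReal + (P (s ∩ t)).toReal = (P s).toReal + (P t).toReal := by
    rw [← ENNReal.toReal_add (measure_ne_top _ _) (measure_ne_top _ _),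
      ← ENNReal.toReal_add (measure_ne_top _ _) (measure_ne_top _ _), h]
  linarith

lemma wb_tendsto_Ioc {μs : ℕ → ProbabilityMeasure ℝ} {μ' : ProbabilityMeasure ℝ} {D : Set ℝ}
    (hD : ∀ x ∈ D, Tendsto (fun n => ((μs n : Measure ℝ) (Iic x)).toReal) atTop
      (𝓝 (((μ' : Measure ℝ) (Iic x)).toReal)))
    {a b : ℝ} (ha : a ∈ D) (hb : b ∈ D) :
    Tendsto (fun n => ((μs n : Measure ℝ) (Ioc a b)).toReal) atTop
      (𝓝 (((μ' : Measure ℝ) (Ioc a b)).toReal)) := by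
  rcases le_or_gt a b with hab | hab
  · simp only [wb_Ioc_toReal _ hab]
    exact (hD b hb).sub (hD a ha)
  · rw [Ioc_eq_empty (not_lt.mpr hab.le)]
    simp [tendsto_const_nhds]

lemma wb_tendsto_biUnion {μs : ℕ → ProbabilityMeasure ℝ} {μ' : ProbabilityMeasure ℝ} {D : Set ℝ}
    (hD : ∀ x ∈ D, Tendsto (fun n => ((μs n : Measure ℝ) (Iic x)).toReal) atTop
      (𝓝 (((μ' : Measure ℝ) (Iic x)).toReal)))
    (J : Finset ℕ) :
    ∀ (a b : ℕ → ℝ), (∀ j ∈ J, a j ∈ D) → (∀ j ∈ J, b j ∈ D) →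
    Tendsto (fun n => ((μs n : Measure ℝ) (⋃ j ∈ J, Ioc (a j) (b j))).toReal) atTop
      (𝓝 (((μ' : Measure ℝ) (⋃ j ∈ J, Ioc (a j) (b j))).toReal)) := by
  classical
  induction J using Finset.induction_on with
  | empty => intro a b _ _; simp [tendsto_const_nhds]
  | insert i J hiJ IH =>
    intro a b haD hbD
    have hmeas : MeasurableSet (⋃ j ∈ J, Ioc (a j) (b j)) :=
      (J.finite_toSet).measurableSet_biUnion (fun j _ => measurableSet_Ioc)
    have hinter : ∀ n : ℕ, Ioc (a i) (b i) ∩ (⋃ j ∈ J, Ioc (a j) (b j))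
        = ⋃ j ∈ J, Ioc (a i ⊔ a j) (b i ⊓ b j) := by
      intro n
      rw [inter_iUnion₂]
      exact iUnion₂_congr (fun j _ => Ioc_inter_Ioc)
    have hset : ∀ j ∈ ({i} : Finset ℕ) ∪ J, True := fun _ _ => trivial
    have hrw : (⋃ j ∈ insert i J, Ioc (a j) (b j))
        = Ioc (a i) (b i) ∪ ⋃ j ∈ J, Ioc (a j) (b j) := by
      simp [Set.biUnion_insert]
    have hA := wb_tendsto_Ioc hD (haD i (Finset.mem_insert_self i J))
      (hbD i (Finset.mem_insert_self i J))
    have hU := IH a b (fun j hj => haD j (Finset.mem_insert_of_mem hj))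
      (fun j hj => hbD j (Finset.mem_insert_of_mem hj))
    have hsupD : ∀ j ∈ J, a i ⊔ a j ∈ D := by
      intro j hj
      rcases le_total (a i) (a j) with h | h
      · rw [sup_eq_right.mpr h]; exact haD j (Finset.mem_insert_of_mem hj)
      · rw [sup_eq_left.mpr h]; exact haD i (Finset.mem_insert_self i J)
    have hinfD : ∀ j ∈ J, b i ⊓ b j ∈ D := by
      intro j hj
      rcases le_total (b i) (b j) with h | h
      · rw [inf_eq_left.mpr h]; exact hbD i (Finset.mem_insert_self i J)
      · rw [inf_eq_right.mpr h]; exact hbD j (Finset.mem_insert_of_mem hj)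
    have hI := IH (fun j => a i ⊔ a j) (fun j => b i ⊓ b j) hsupD hinfD
    rw [hrw]
    simp only [wb_union_toReal _ hmeas, hinter 0]
    exact (hA.add hU).sub hI

lemma wb_coe (μ : ProbabilityMeasure ℝ) (s : Set ℝ) :
    (μ s : ℝ) = ((μ : Measure ℝ) s).toReal := rfl

lemma wb_tendsto_of_cdf {μs : ℕ → ProbabilityMeasure ℝ} {μ' : ProbabilityMeasure ℝ} {D : Set ℝ}
    (hdense : Dense D)
    (hD : ∀ x ∈ D, Tendsto (fun n => ((μs n : Measure ℝ) (Iic x)).toReal) atTop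
      (𝓝 (((μ' : Measure ℝ) (Iic x)).toReal))) :
    Tendsto μs atTop (𝓝 μ') := by
  apply MeasureTheory.tendsto_of_forall_isOpen_le_liminf
  intro G hG
  -- family of intervals with endpoints in D included in G
  set ι : Type := {p : ℝ × ℝ // p.1 ∈ D ∧ p.2 ∈ D ∧ Ioc p.1 p.2 ⊆ G} with hι
  have hsub : G ⊆ ⋃ p : ι, Ioo p.1.1 p.1.2 := by
    intro x hx
    obtain ⟨ε, hε, hball⟩ := Metric.isOpen_iff.mp hG x hx
    obtain ⟨c, hcD, hc⟩ := hdense.exists_between (show x - ε < x by linarith)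
    obtain ⟨d, hdD, hd⟩ := hdense.exists_between (show x < x + ε by linarith)
    have hIoc : Ioc c d ⊆ G := by
      intro y hy
      apply hball
      rw [Real.ball_eq_Ioo]
      exact ⟨hc.1.trans hy.1, lt_of_le_of_lt hy.2 hd.2⟩
    exact mem_iUnion.mpr ⟨⟨(c, d), hcD, hdD, hIoc⟩, hc.2, hd.1⟩
  obtain ⟨T, hTc, hTU⟩ := TopologicalSpace.isOpen_iUnion_countable
    (fun p : ι => Ioo p.1.1 p.1.2) (fun p => isOpen_Ioo)
  rcases T.eq_empty_or_nonempty with hTe | hTne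
  · have : G = ∅ := by
      apply eq_empty_of_subset_empty
      refine hsub.trans ?_
      rw [← hTU, hTe]
      simp
    rw [this]
    have h0 : μ' (∅ : Set ℝ) = 0 := by
      have : μ' (∅ : Set ℝ) = ((μ' : Measure ℝ) ∅).toNNReal := rfl
      rw [this, measure_empty]; rfl
    rw [h0]
    exact zero_le
  obtain ⟨e, he⟩ := hTc.exists_eq_range hTne
  set W : ℕ → Set ℝ := fun m => ⋃ j ∈ Finset.range (m + 1), Ioc (e j).1.1 (e j).1.2 with hW
  have hWG : ∀ m, W m ⊆ G := by
    intro m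
    exact iUnion₂_subset fun j _ => (e j).2.2.2
  have hWmono : Monotone W := by
    intro m m' hmm
    exact biUnion_subset_biUnion_left (Finset.range_subset_range.mpr (by omega))
  have hWU : ⋃ m, W m = G := by
    apply subset_antisymm (iUnion_subset hWG)
    intro x hx
    have : x ∈ ⋃ p ∈ T, Ioo (p : ι).1.1 p.1.2 := by rw [hTU]; exact hsub hx
    obtain ⟨p, hpT, hxp⟩ := mem_iUnion₂.mp this
    rw [he] at hpT
    obtain ⟨j, hj⟩ := hpT
    refine mem_iUnion.mpr ⟨j, ?_⟩
    refine mem_biUnion (Finset.self_mem_range_succ j) ?_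
    rw [hj]
    exact Ioo_subset_Ioc_self hxp
  have hlim : Tendsto (fun m => (μ' : Measure ℝ) (W m)) atTop (𝓝 ((μ' : Measure ℝ) G)) := by
    rw [← hWU]
    exact tendsto_measure_iUnion_atTop hWmono
  have h1 : ∀ m, Tendsto (fun n => μs n (W m)) atTop (𝓝 (μ' (W m))) := by
    intro m
    rw [← NNReal.tendsto_coe]
    simp only [wb_coe]
    exact wb_tendsto_biUnion hD (Finset.range (m + 1)) (fun j => (e j).1.1) (fun j => (e j).1.2)
      (fun j _ => (e j).2.1) (fun j _ => (e j).2.2.1)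
  have h2 : ∀ m, μ' (W m) ≤ atTop.liminf fun n => μs n G := by
    intro m
    rw [← (h1 m).liminf_eq]
    apply Filter.liminf_le_liminf
    · exact Eventually.of_forall fun n => (μs n).apply_mono (hWG m)
    · exact isBoundedUnder_of ⟨0, fun n => zero_le⟩
    · exact (isBoundedUnder_of ⟨1, fun n => (μs n).apply_le_one _⟩).isCoboundedUnder_ge
  have h3 : Tendsto (fun m => μ' (W m)) atTop (𝓝 (μ' G)) := by
    have := (ENNReal.tendsto_toNNReal (measure_ne_top (μ' : Measure ℝ) G)).comp hlim
    exact this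
  exact le_of_tendsto h3 (Eventually.of_forall h2)

lemma wb_tight (ν : ProbabilityMeasure ℝ) (hν : Integrable id (ν : Measure ℝ)) (r : ℝ)
    {μ : ProbabilityMeasure ℝ}
    (hμ : ∀ f : ℝ → ℝ, LipschitzWith 1 f → (∃ C, ∀ x, |f x| ≤ C) →
      (∫ x, f x ∂(μ : Measure ℝ)) - ∫ x, f x ∂(ν : Measure ℝ) ≤ r)
    {a : ℝ} (ha : 0 < a) :
    ((μ : Measure ℝ) {y | a ≤ |y|}).toReal ≤ (r + ∫ x, |x| ∂(ν : Measure ℝ)) / a := by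
  set f : ℝ → ℝ := fun y => min |y| a with hf
  have hf_lip : LipschitzWith 1 f := by
    have := (LipschitzWith.min_const lipschitzWith_one_norm a : LipschitzWith 1 fun y : ℝ => min ‖y‖ a)
    simpa [Real.norm_eq_abs] using this
  have hf_nonneg : ∀ y, 0 ≤ f y := fun y => le_min (abs_nonneg y) ha.le
  have hf_le_a : ∀ y, f y ≤ a := fun y => min_le_right _ _
  have hf_bdd : ∃ C, ∀ y, |f y| ≤ C := ⟨a, fun y => by
    rw [abs_of_nonneg (hf_nonneg y)]; exact hf_le_a y⟩
  have hf_int : ∀ (P : Measure ℝ) [IsProbabilityMeasure P], Integrable f P := by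
    intro P _
    refine Integrable.mono' (integrable_const a) hf_lip.continuous.aestronglyMeasurable ?_
    exact Filter.Eventually.of_forall fun y => by
      rw [Real.norm_eq_abs, abs_of_nonneg (hf_nonneg y)]; exact hf_le_a y
  have hmarkov := mul_meas_ge_le_integral_of_nonneg
    (Filter.Eventually.of_forall hf_nonneg) (hf_int (μ : Measure ℝ)) a
  have hsetEq : {y : ℝ | a ≤ f y} = {y : ℝ | a ≤ |y|} := by
    ext y
    simp only [hf, mem_setOf_eq, le_min_iff, le_refl, and_true]
  rw [hsetEq] at hmarkov
  have h1 : (∫ y, f y ∂(μ : Measure ℝ)) ≤ r + ∫ y, f y ∂(ν : Measure ℝ) := by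
    have := hμ f hf_lip hf_bdd
    linarith
  have h2 : (∫ y, f y ∂(ν : Measure ℝ)) ≤ ∫ y, |y| ∂(ν : Measure ℝ) := by
    have habs : Integrable (fun y : ℝ => |y|) (ν : Measure ℝ) := hν.abs
    exact integral_mono (hf_int (ν : Measure ℝ)) habs (fun y => min_le_left _ _)
  rw [measureReal_def] at hmarkov
  rw [le_div_iff₀ ha, mul_comm]
  linarith


theorem wasserstein_ball_isCompact (ν : ProbabilityMeasure ℝ)
    (hν : Integrable id (ν : Measure ℝ)) (r : ℝ) (hr : 0 ≤ r) :
    IsCompact {μ : ProbabilityMeasure ℝ |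
      ∀ f : ℝ → ℝ, LipschitzWith 1 f → (∃ C, ∀ x, |f x| ≤ C) →
        (∫ x, f x ∂(μ : Measure ℝ)) - ∫ x, f x ∂(ν : Measure ℝ) ≤ r} := by
  classical
  set K : ℝ := r + ∫ x, |x| ∂(ν : Measure ℝ) with hKdef
  have hK0 : 0 ≤ K := add_nonneg hr (integral_nonneg fun x => abs_nonneg x)
  letI : MetricSpace (ProbabilityMeasure ℝ) := TopologicalSpace.metrizableSpaceMetric _
  apply IsSeqCompact.isCompact
  intro x hx
  -- tightness bounds
  have htight : ∀ n, ∀ a : ℝ, 0 < a →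
      ((x n : Measure ℝ) {y | a ≤ |y|}).toReal ≤ K / a :=
    fun n a ha => wb_tight ν hν r (hx n) ha
  -- cdfs
  set cdfn : ℕ → ℝ → ℝ := fun n t => ((x n : Measure ℝ) (Iic t)).toReal with hcdfn
  have hcdf_mono : ∀ n, Monotone (cdfn n) := fun n s t hst =>
    ENNReal.toReal_mono (measure_ne_top _ _) (measure_mono (Iic_subset_Iic.mpr hst))
  have hcdf01 : ∀ n t, cdfn n t ∈ Icc (0 : ℝ) 1 := by
    intro n t
    constructor
    · exact ENNReal.toReal_nonneg
    · calc cdfn n t ≤ ((x n : Measure ℝ) univ).toReal :=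
            ENNReal.toReal_mono (measure_ne_top _ _) (measure_mono (subset_univ _))
        _ = 1 := by simp
  -- diagonal extraction
  set g : ℕ → (ℚ → Icc (0:ℝ) 1) := fun n q => ⟨cdfn n (q : ℝ), hcdf01 n q⟩ with hg
  obtain ⟨G, -, φ, hφmono, hφtend⟩ := IsCompact.tendsto_subseq
    (isCompact_univ (X := ℚ → Icc (0:ℝ) 1)) (fun n => mem_univ (g n))
  set G0 : ℚ → ℝ := fun q => (G q : ℝ) with hG0
  have hGq : ∀ q : ℚ, Tendsto (fun n => cdfn (φ n) (q : ℝ)) atTop (𝓝 (G0 q)) := by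
    intro q
    have h1 : Tendsto (fun n => g (φ n) q) atTop (𝓝 (G q)) := tendsto_pi_nhds.mp hφtend q
    exact (continuous_subtype_val.tendsto (G q)).comp h1
  have hG0mono : ∀ q q' : ℚ, q ≤ q' → G0 q ≤ G0 q' := by
    intro q q' hqq
    exact le_of_tendsto_of_tendsto' (hGq q) (hGq q')
      (fun n => hcdf_mono (φ n) (by exact_mod_cast hqq))
  have hG0mem : ∀ q : ℚ, G0 q ∈ Icc (0:ℝ) 1 := fun q => (G q).2
  -- the candidate limit cdf
  have hnon : ∀ t : ℝ, Nonempty {q : ℚ // t < (q : ℝ)} := by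
    intro t; obtain ⟨q, hq⟩ := exists_rat_gt t; exact ⟨⟨q, hq⟩⟩
  have hbddB : ∀ t : ℝ, BddBelow (range fun q : {q : ℚ // t < (q:ℝ)} => G0 q.1) := by
    intro t; exact ⟨0, by rintro y ⟨q, rfl⟩; exact (hG0mem q.1).1⟩
  set f₀ : ℝ → ℝ := fun t => ⨅ q : {q : ℚ // t < (q:ℝ)}, G0 q.1 with hf₀
  have hf₀mono : Monotone f₀ := by
    intro s t hst
    haveI := hnon t
    refine le_ciInf fun q => ?_
    exact ciInf_le (hbddB s) ⟨q.1, lt_of_le_of_lt hst q.2⟩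
  set SF := hf₀mono.stieltjesFunction with hSF
  have key1 : ∀ (q : ℚ) (t : ℝ), (q : ℝ) ≤ t → G0 q ≤ SF t := by
    intro q t hqt
    have h1 : G0 q ≤ f₀ t := by
      haveI := hnon t
      refine le_ciInf fun q' => ?_
      exact hG0mono q q'.1 (by exact_mod_cast hqt.trans_lt q'.2 |>.le)
    exact h1.trans (hf₀mono.le_rightLim le_rfl)
  have key2 : ∀ (q : ℚ) (t : ℝ), t < (q : ℝ) → SF t ≤ G0 q := by
    intro q t htq
    set y := (t + q) / 2 with hy
    have hty : t < y := by rw [hy]; linarith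
    have hyq : y < q := by rw [hy]; linarith
    calc SF t ≤ f₀ y := hf₀mono.rightLim_le hty
      _ ≤ G0 q := ciInf_le (hbddB y) ⟨q, hyq⟩
  have hSF0 : ∀ t, 0 ≤ SF t := by
    intro t
    obtain ⟨q, hq⟩ := exists_rat_lt t
    exact (hG0mem q).1.trans (key1 q t hq.le)
  have hSF1 : ∀ t, SF t ≤ 1 := by
    intro t
    obtain ⟨q, hq⟩ := exists_rat_gt t
    exact (key2 q t hq).trans (hG0mem q).2
  -- tail bounds
  have hcdf_low : ∀ n (t : ℝ), t < 0 → cdfn n t ≤ K / (-t) := by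
    intro n t ht
    refine le_trans ?_ (htight n (-t) (by linarith))
    refine ENNReal.toReal_mono (measure_ne_top _ _) (measure_mono ?_)
    intro y hy
    simp only [mem_setOf_eq, mem_Iic] at *
    rw [abs_of_nonpos (by linarith : y ≤ 0)]
    linarith
  have hcdf_hi : ∀ n (t : ℝ), 0 < t → 1 - K / t ≤ cdfn n t := by
    intro n t ht
    have hioi : ((x n : Measure ℝ) (Ioi t)).toReal ≤ K / t := by
      refine le_trans ?_ (htight n t ht)
      refine ENNReal.toReal_mono (measure_ne_top _ _) (measure_mono ?_)
      intro y hy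
      simp only [mem_setOf_eq, mem_Ioi] at *
      rw [abs_of_pos (by linarith : 0 < y)]
      linarith
    have hsum : cdfn n t + ((x n : Measure ℝ) (Ioi t)).toReal = 1 := by
      have h := measure_add_measure_compl (μ := (x n : Measure ℝ)) (measurableSet_Iic (a := t))
      rw [compl_Iic] at h
      have := congrArg ENNReal.toReal h
      rwa [ENNReal.toReal_add (measure_ne_top _ _) (measure_ne_top _ _), measure_univ,
        ENNReal.toReal_one] at this
    linarith
  have hG0_low : ∀ q : ℚ, (q : ℝ) < 0 → G0 q ≤ K / (-(q:ℝ)) := fun q hq =>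
    le_of_tendsto (hGq q) (Filter.Eventually.of_forall fun n => hcdf_low (φ n) q hq)
  have hG0_hi : ∀ q : ℚ, 0 < (q : ℝ) → 1 - K / (q:ℝ) ≤ G0 q := fun q hq =>
    ge_of_tendsto (hGq q) (Filter.Eventually.of_forall fun n => hcdf_hi (φ n) q hq)
  -- SF is a probability cdf
  have hbot : Tendsto SF atBot (𝓝 0) := by
    have hbd : BddBelow (range SF) := ⟨0, by rintro y ⟨t, rfl⟩; exact hSF0 t⟩
    have h := tendsto_atBot_ciInf SF.mono hbd
    have hiInf : ⨅ t, SF t = 0 := by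
      refine le_antisymm ?_ (le_ciInf hSF0)
      refine le_of_forall_pos_le_add fun ε hε => ?_
      obtain ⟨q, hq⟩ := exists_rat_lt (min (-(K + 1) / ε) 0)
      have hq0 : (q : ℝ) < 0 := hq.trans_le (min_le_right _ _)
      have hqK : (q : ℝ) < -(K + 1) / ε := hq.trans_le (min_le_left _ _)
      have hKq : K / (-(q:ℝ)) ≤ ε := by
        rw [div_le_iff₀ (by nlinarith : (0:ℝ) < -(q:ℝ))]
        have h1 : (K + 1) / ε < -(q:ℝ) := by linarith [neg_div ε (K+1)]
        have h2 : K + 1 < ε * (-(q:ℝ)) := by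
          rw [div_lt_iff₀ hε] at h1; linarith
        linarith
      calc ⨅ t, SF t ≤ SF ((q : ℝ) - 1) := ciInf_le hbd _
        _ ≤ G0 q := key2 q _ (by linarith)
        _ ≤ K / (-(q:ℝ)) := hG0_low q hq0
        _ ≤ 0 + ε := by linarith
    rwa [hiInf] at h
  have htop : Tendsto SF atTop (𝓝 1) := by
    have hbd : BddAbove (range SF) := ⟨1, by rintro y ⟨t, rfl⟩; exact hSF1 t⟩
    have h := tendsto_atTop_ciSup SF.mono hbd
    have hiSup : ⨆ t, SF t = 1 := by
      refine le_antisymm (ciSup_le hSF1) ?_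
      refine le_of_forall_pos_le_add fun ε hε => ?_
      obtain ⟨q, hq⟩ := exists_rat_gt (max ((K + 1) / ε) 0)
      have hq0 : 0 < (q : ℝ) := (le_max_right _ _).trans_lt hq
      have hqK : (K + 1) / ε < (q : ℝ) := (le_max_left _ _).trans_lt hq
      have hKq : K / (q:ℝ) ≤ ε := by
        rw [div_le_iff₀ hq0]
        rw [div_lt_iff₀ hε] at hqK
        nlinarith
      have h1 : 1 - ε ≤ G0 q := by
        have := hG0_hi q hq0
        linarith
      calc (1:ℝ) ≤ G0 q + ε := by linarith
        _ ≤ SF (q:ℝ) + ε := by linarith [key1 q (q:ℝ) le_rfl]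
        _ ≤ (⨆ t, SF t) + ε := by
            have := le_ciSup hbd (q : ℝ); linarith
    rwa [hiSup] at h
  haveI hPM : IsProbabilityMeasure SF.measure := SF.isProbabilityMeasure hbot htop
  set μ' : ProbabilityMeasure ℝ := ⟨SF.measure, hPM⟩ with hμ'
  have hμ'Iic : ∀ t : ℝ, ((μ' : Measure ℝ) (Iic t)).toReal = SF t := by
    intro t
    have : (μ' : Measure ℝ) = SF.measure := rfl
    rw [this, StieltjesFunction.measure_Iic SF hbot, sub_zero,
      ENNReal.toReal_ofReal (hSF0 t)]
  -- continuity points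
  set D : Set ℝ := {t | ContinuousAt SF t} with hD
  have hDdense : Dense D := by
    have hc : {t | ¬ ContinuousAt SF t}.Countable := SF.mono.countable_not_continuousAt
    have := hc.dense_compl ℝ
    have heq : {t | ¬ ContinuousAt SF t}ᶜ = D := by
      ext t; simp [hD]
    rwa [heq] at this
  have hDcdf : ∀ t ∈ D, Tendsto (fun n => cdfn (φ n) t) atTop (𝓝 (SF t)) := by
    intro t ht
    refine tendsto_order.2 ⟨?_, ?_⟩
    · intro b hb
      have hev : ∀ᶠ y in 𝓝 t, b < SF y := ht.eventually (eventually_gt_nhds hb)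
      obtain ⟨l, u, hlu, hsub⟩ := mem_nhds_iff_exists_Ioo_subset.mp hev
      set y := (l + t) / 2 with hy
      have hly : l < y := by rw [hy]; linarith [hlu.1]
      have hyt : y < t := by rw [hy]; linarith [hlu.1]
      obtain ⟨q, hq1, hq2⟩ := exists_rat_btwn hyt
      have hbq : b < G0 q := by
        have h1 : b < SF y := hsub ⟨hly, hyt.trans hlu.2⟩
        exact h1.trans_le ((key2 q y hq1).trans (le_refl _))
      have hev2 : ∀ᶠ n in atTop, b < cdfn (φ n) (q : ℝ) :=
        (hGq q).eventually (eventually_gt_nhds hbq)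
      filter_upwards [hev2] with n hn
      exact hn.trans_le (hcdf_mono (φ n) hq2.le)
    · intro b hb
      have hev : ∀ᶠ y in 𝓝 t, SF y < b := ht.eventually (eventually_lt_nhds hb)
      obtain ⟨l, u, hlu, hsub⟩ := mem_nhds_iff_exists_Ioo_subset.mp hev
      set y := (t + u) / 2 with hy
      have hty : t < y := by rw [hy]; linarith [hlu.2]
      have hyu : y < u := by rw [hy]; linarith [hlu.2]
      obtain ⟨q, hq1, hq2⟩ := exists_rat_btwn hty
      have hqb : G0 q < b := by
        have h1 : SF y < b := hsub ⟨hlu.1.trans hty, hyu⟩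
        exact lt_of_le_of_lt ((key1 q y hq2.le).trans (le_refl _)) h1
      have hev2 : ∀ᶠ n in atTop, cdfn (φ n) (q : ℝ) < b :=
        (hGq q).eventually (eventually_lt_nhds hqb)
      filter_upwards [hev2] with n hn
      exact lt_of_le_of_lt (hcdf_mono (φ n) hq1.le) hn
  -- weak convergence of the subsequence
  have htends : Tendsto (fun n => x (φ n)) atTop (𝓝 μ') := by
    apply wb_tendsto_of_cdf hDdense
    intro t ht
    rw [hμ'Iic t]
    exact hDcdf t ht
  -- the limit is in the set
  have hmem : ∀ f : ℝ → ℝ, LipschitzWith 1 f → (∃ C, ∀ y, |f y| ≤ C) →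
      (∫ y, f y ∂(μ' : Measure ℝ)) - ∫ y, f y ∂(ν : Measure ℝ) ≤ r := by
    intro f hf hfb
    obtain ⟨C, hC⟩ := hfb
    set F : BoundedContinuousFunction ℝ ℝ :=
      ⟨⟨f, hf.continuous⟩, ⟨2 * C, fun s t => by
        have := hC s; have := hC t
        calc dist (f s) (f t) = |f s - f t| := Real.dist_eq _ _
          _ ≤ |f s| + |f t| := abs_sub _ _
          _ ≤ 2 * C := by linarith⟩⟩ with hF
    have hint := MeasureTheory.ProbabilityMeasure.tendsto_iff_forall_integral_tendsto.mp htends F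
    have hFf : ∀ (P : Measure ℝ), (∫ y, F y ∂P) = ∫ y, f y ∂P := fun P => rfl
    rw [hFf] at hint
    have hub : ∀ n, (∫ y, f y ∂(x (φ n) : Measure ℝ)) ≤ r + ∫ y, f y ∂(ν : Measure ℝ) := by
      intro n
      have := hx (φ n) f hf ⟨C, hC⟩
      linarith
    have := le_of_tendsto hint (Filter.Eventually.of_forall fun n => by
      have h := hub n
      simpa [hFf] using h)
    linarith
  exact ⟨μ', hmem, φ, hφmono, htends⟩
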